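/- Let α > 0 and suppose Q_k, b_k, u_k (k = 0,…,N) satisfy the recursions Q_{k-1} = α(Q_k + αI)^{-1}Q_k + F_{k-1}* L_{k-1} F_{k-1}, b_{k-1} = α(Q_k + αI)^{-1} b_k - F_{k-1}* L_{k-1} y_{k-1}, and u_{k+1} = (Q_{k+1} + αI)^{-1}(α u_k - b_{k+1}), with terminal conditions Q_N = F_N* L_N F_N, b_N = -F_N* L_N y_N. If one extends u by u_{N+1} := u_N, then for every k = 1,…,N the discrete Euler–Lagrange equation F_k* L_k F_k u_k - α(u_{k-1} - 2u_k + u_{k+1}) = F_k* L_k y_k holds. -/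
import Mathlib


open scoped RealInnerProductSpace

section Aux

variable {X : Type*} [NormedAddCommGroup X] [InnerProductSpace ℝ X] [CompleteSpace X]

lemma aux_isUnit {T : X →L[ℝ] X} {α : ℝ} (hα : 0 < α)
    (hpos : ∀ z, 0 ≤ ⟪z, T z⟫) : IsUnit (T + α • (1 : X →L[ℝ] X)) := by
  refine ContinuousLinearMap.isUnit_of_forall_le_norm_inner_map _
    (c := ⟨α, hα.le⟩) (by exact_mod_cast hα) fun x => ?_
  have h1 : ⟪(T + α • (1 : X →L[ℝ] X)) x, x⟫ = ⟪T x, x⟫ + α * (‖x‖ ^ 2) := by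
    simp [ContinuousLinearMap.add_apply, inner_add_left, real_inner_smul_left,
      real_inner_self_eq_norm_sq]
  have h2 : 0 ≤ ⟪T x, x⟫ := by rw [real_inner_comm]; exact hpos x
  have : ‖x‖ ^ 2 * α ≤ ⟪(T + α • (1 : X →L[ℝ] X)) x, x⟫ := by
    rw [h1]; nlinarith
  calc ‖x‖ ^ 2 * (⟨α, hα.le⟩ : NNReal) = ‖x‖ ^ 2 * α := rfl
    _ ≤ ⟪(T + α • (1 : X →L[ℝ] X)) x, x⟫ := this
    _ ≤ ‖⟪(T + α • (1 : X →L[ℝ] X)) x, x⟫‖ := le_abs_self _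

end Aux

set_option maxHeartbeats 1000000 in
/-- The dynamic-programming iterates `Q_k, b_k, u_k` (with `u_{N+1} := u_N`) satisfy the
discrete Euler–Lagrange equation
`F_k* L_k F_k u_k - α(u_{k-1} - 2u_k + u_{k+1}) = F_k* L_k y_k` for `k = 1,…,N`. -/
theorem dynamic_programming_iterates_satisfy_discrete_EulerLagrange
    {X Y : Type*} [NormedAddCommGroup X] [InnerProductSpace ℝ X] [CompleteSpace X]
    [NormedAddCommGroup Y] [InnerProductSpace ℝ Y] [CompleteSpace Y]
    (N : ℕ) (α : ℝ) (hα : 0 < α)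
    (F : ℕ → X →L[ℝ] Y) (L : ℕ → Y →L[ℝ] Y)
    (hLsa : ∀ k, IsSelfAdjoint (L k))
    (hLpos : ∀ k (z : Y), 0 ≤ ⟪z, L k z⟫)
    (y : ℕ → Y) (Q : ℕ → X →L[ℝ] X) (b : ℕ → X) (u : ℕ → X)
    (hQN : Q N = (F N).adjoint ∘L ((L N) ∘L (F N)))
    (hbN : b N = -((F N).adjoint ((L N) (y N))))
    (hQrec : ∀ k < N, Q k =
      α • (Ring.inverse (Q (k + 1) + α • (1 : X →L[ℝ] X)) * Q (k + 1)) +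
        (F k).adjoint ∘L ((L k) ∘L (F k)))
    (hbrec : ∀ k < N, b k =
      α • (Ring.inverse (Q (k + 1) + α • (1 : X →L[ℝ] X))) (b (k + 1)) -
        (F k).adjoint ((L k) (y k)))
    (hurec : ∀ k < N, u (k + 1) =
      (Ring.inverse (Q (k + 1) + α • (1 : X →L[ℝ] X))) (α • u k - b (k + 1)))
    (hext : u (N + 1) = u N) :
    ∀ k, 1 ≤ k → k ≤ N →
      (F k).adjoint ((L k) ((F k) (u k))) -
        α • (u (k - 1) - (2 : ℝ) • u k + u (k + 1)) =
      (F k).adjoint ((L k) (y k)) := by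
  -- positivity and self-adjointness of A k := F* L F
  have hApos : ∀ k (z : X), 0 ≤ ⟪z, ((F k).adjoint ∘L ((L k) ∘L (F k))) z⟫ := by
    intro k z
    simp only [ContinuousLinearMap.comp_apply]
    rw [ContinuousLinearMap.adjoint_inner_right]
    exact hLpos k _
  have hAsa : ∀ k, IsSelfAdjoint ((F k).adjoint ∘L ((L k) ∘L (F k))) := by
    intro k
    rw [ContinuousLinearMap.isSelfAdjoint_iff']
    rw [ContinuousLinearMap.adjoint_comp, ContinuousLinearMap.adjoint_comp,
      ContinuousLinearMap.adjoint_adjoint, (hLsa k).adjoint_eq,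
      ContinuousLinearMap.comp_assoc]
  -- self-adjointness and positivity of Q k for k ≤ N, by downward induction
  have key : ∀ m, m ≤ N →
      IsSelfAdjoint (Q (N - m)) ∧ ∀ z, 0 ≤ ⟪z, Q (N - m) z⟫ := by
    intro m
    induction m with
    | zero => intro _; simpa using ⟨hQN ▸ hAsa N, hQN ▸ hApos N⟩
    | succ m ih =>
      intro hm
      obtain ⟨ihsa, ihpos⟩ := ih (Nat.le_of_succ_le hm)
      set k := N - (m + 1) with hk
      have hkN : k < N := by omega
      have hk1 : k + 1 = N - m := by omega
      rw [← hk1] at ihsa ihpos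
      set T := Q (k + 1) + α • (1 : X →L[ℝ] X) with hT
      have hTsa : IsSelfAdjoint T :=
        ihsa.add (by rw [IsSelfAdjoint, star_smul, star_trivial, star_one])
      have hTunit : IsUnit T := aux_isUnit hα ihpos
      have hRmul : Ring.inverse T * T = 1 := Ring.inverse_mul_cancel T hTunit
      have hmulR : T * Ring.inverse T = 1 := Ring.mul_inverse_cancel T hTunit
      set R := Ring.inverse T with hR
      have hRsa : IsSelfAdjoint R := by
        have := Ring.inverse_star T
        rw [hTsa.star_eq] at this
        exact this.symm
      -- R and Q(k+1) commute
      have hcomm : R * Q (k + 1) = Q (k + 1) * R := by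
        have h1 : T * Q (k + 1) = Q (k + 1) * T := by
          simp [hT, add_mul, mul_add, mul_smul_comm, smul_mul_assoc]
        calc R * Q (k + 1) = R * Q (k + 1) * (T * R) := by rw [hmulR, mul_one]
          _ = R * (Q (k + 1) * T) * R := by simp only [mul_assoc]
          _ = R * (T * Q (k + 1)) * R := by rw [h1]
          _ = (R * T) * (Q (k + 1) * R) := by simp only [mul_assoc]
          _ = Q (k + 1) * R := by rw [hRmul, one_mul]
      have hRQsa : IsSelfAdjoint (R * Q (k + 1)) := by
        rw [IsSelfAdjoint, star_mul, ihsa.star_eq, hRsa.star_eq, hcomm]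
      have hRQpos : ∀ z, 0 ≤ ⟪z, (R * Q (k + 1)) z⟫ := by
        intro z
        have hz : z = T (R z) := by
          have : (T * R) z = z := by rw [hmulR]; rfl
          exact this.symm
        set w := R z with hw
        have h2 : (R * Q (k + 1)) z = Q (k + 1) w := by
          rw [hcomm]; rfl
        rw [h2, hz]
        have hT2 : T w = Q (k + 1) w + α • w := by simp [hT]
        rw [hT2, inner_add_left]
        have p1 : (0:ℝ) ≤ ⟪Q (k + 1) w, Q (k + 1) w⟫ := real_inner_self_nonneg
        have p2 : (0:ℝ) ≤ ⟪w, Q (k + 1) w⟫ := ihpos w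
        have : ⟪α • w, Q (k + 1) w⟫ = α * ⟪w, Q (k + 1) w⟫ := real_inner_smul_left _ _ _
        rw [this]
        nlinarith
      constructor
      · rw [hQrec k hkN]
        refine IsSelfAdjoint.add ?_ (hAsa k)
        rw [IsSelfAdjoint, star_smul, star_trivial, hRQsa.star_eq]
      · intro z
        rw [hQrec k hkN]
        have : ⟪z, (α • (R * Q (k + 1)) + (F k).adjoint ∘L ((L k) ∘L (F k))) z⟫
            = α * ⟪z, (R * Q (k + 1)) z⟫ + ⟪z, ((F k).adjoint ∘L ((L k) ∘L (F k))) z⟫ := by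
          simp [inner_add_right, real_inner_smul_right]
        rw [this]
        have := hRQpos z
        have := hApos k z
        nlinarith
  have hQpos : ∀ k ≤ N, ∀ z, 0 ≤ ⟪z, Q k z⟫ := by
    intro k hk z
    have := (key (N - k) (Nat.sub_le _ _)).2 z
    rwa [Nat.sub_sub_self hk] at this
  have hunit : ∀ k ≤ N, IsUnit (Q k + α • (1 : X →L[ℝ] X)) :=
    fun k hk => aux_isUnit hα (hQpos k hk)
  -- step identity: α(u_{k-1} - u_k) = Q_k u_k + b_k for 1 ≤ k ≤ N
  have step : ∀ k, 1 ≤ k → k ≤ N →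
      α • (u (k - 1) - u k) = Q k (u k) + b k := by
    intro k hk1 hkN
    obtain ⟨j, rfl⟩ : ∃ j, k = j + 1 := ⟨k - 1, by omega⟩
    have hjN : j < N := by omega
    have hu := hurec j hjN
    set T := Q (j + 1) + α • (1 : X →L[ℝ] X) with hT
    have hmulR : T * Ring.inverse T = 1 := Ring.mul_inverse_cancel T (hunit _ hkN)
    have happ : T (u (j + 1)) = α • u j - b (j + 1) := by
      rw [hu]
      have : (T * Ring.inverse T) (α • u j - b (j + 1)) = α • u j - b (j + 1) := by
        rw [hmulR]; rfl
      exact this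
    have hT2 : T (u (j + 1)) = Q (j + 1) (u (j + 1)) + α • u (j + 1) := by simp [hT]
    rw [hT2] at happ
    simp only [Nat.add_sub_cancel]
    linear_combination (norm := module) -happ
  intro k hk1 hkN
  rcases eq_or_lt_of_le hkN with heq | hlt
  · -- k = N
    subst heq
    have hs := step k hk1 le_rfl
    rw [hQN, hbN] at hs
    rw [hext]
    have : u (k - 1) - (2:ℝ) • u k + u k = u (k - 1) - u k := by
      rw [two_smul]; abel
    rw [this, hs]
    simp only [ContinuousLinearMap.comp_apply]
    abel
  · -- k < N
    have hs := step k hk1 hkN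
    have hk1N : k + 1 ≤ N := hlt
    set T := Q (k + 1) + α • (1 : X →L[ℝ] X) with hT
    set R := Ring.inverse T with hR
    have hRmul : R * T = 1 := Ring.inverse_mul_cancel T (hunit _ hk1N)
    have hu := hurec k hlt
    -- α R (Q_{k+1} u_k + b_{k+1}) = α u_k - α u_{k+1}
    have hkey : α • (R * Q (k + 1)) (u k) + α • R (b (k + 1))
        = α • u k - α • u (k + 1) := by
      have h1 : (R * Q (k + 1)) (u k) = R (Q (k + 1) (u k)) := rfl
      have h2 : R (T (u k)) = u k := by
        have : (R * T) (u k) = u k := by rw [hRmul]; rfl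
        exact this
      have h3 : T (u k) = Q (k + 1) (u k) + α • u k := by simp [hT]
      have h4 : R (Q (k + 1) (u k)) = u k - α • R (u k) := by
        have := h2
        rw [h3, map_add, map_smul] at this
        linear_combination (norm := module) this
      have h5 : u (k + 1) = α • R (u k) - R (b (k + 1)) := by
        rw [hu, map_sub, map_smul]
      rw [h1, h4, h5]
      module
    rw [hQrec k hlt, hbrec k hlt] at hs
    simp only [ContinuousLinearMap.add_apply, ContinuousLinearMap.coe_smul',
      Pi.smul_apply] at hs
    -- hs : α • (u (k-1) - u k) = α • (R * Q(k+1)) (u k) + A k (u k) + (α • R (b (k+1)) - c k)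
    have hs' : α • (u (k - 1) - u k)
        = (α • u k - α • u (k + 1)) + ((F k).adjoint ∘L ((L k) ∘L (F k))) (u k)
          - (F k).adjoint ((L k) (y k)) := by
      rw [← hkey]
      linear_combination (norm := module) hs
    have hfinal := hs'
    simp only [ContinuousLinearMap.comp_apply] at hfinal
    linear_combination (norm := module) -hfinal
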